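/- Let x = (x₁,x₂) ∈ ℝ² be nonzero and y = (y₁,y₂,y₃) ∈ ℝ³ be nonzero, regarded as the binary forms x₁u₁+x₂u₂ and y₁u₁²+y₂u₁u₂+y₃u₂². Then there exist an invertible matrix g ∈ GL(2,ℝ) and nonzero scalars c, d ∈ ℝ such that the substituted forms x∘g and y∘g (where (x∘g)(u₁,u₂) = x(g₁₁u₁+g₁₂u₂, g₂₁u₁+g₂₂u₂), and similarly for y) satisfy x∘g = c·u₁ and y∘g = d·q, where q is exactly one of the five quadratic forms u₁²−u₂², u₂², u₁², u₁u₂, u₁²+u₂²; moreover for a given pair (x,y) precisely one of the five forms q can occur in this way. -/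

import Mathlib

noncomputable section

/-- The action of `g ∈ GL(2,ℝ)` on binary linear forms by substitution of variables,
in coordinates: `x∘g` has coefficients `(x₁g₁₁ + x₂g₂₁, x₁g₁₂ + x₂g₂₂)`. -/
def linAct (g : Matrix (Fin 2) (Fin 2) ℝ) (x : Fin 2 → ℝ) : Fin 2 → ℝ :=
  ![x 0 * g 0 0 + x 1 * g 1 0, x 0 * g 0 1 + x 1 * g 1 1]

/-- The action of `g ∈ GL(2,ℝ)` on binary quadratic forms by substitution of variables. -/
def quadAct (g : Matrix (Fin 2) (Fin 2) ℝ) (y : Fin 3 → ℝ) : Fin 3 → ℝ :=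
  ![y 0 * g 0 0 ^ 2 + y 1 * g 0 0 * g 1 0 + y 2 * g 1 0 ^ 2,
    2 * y 0 * g 0 0 * g 0 1 + y 1 * (g 0 0 * g 1 1 + g 0 1 * g 1 0) + 2 * y 2 * g 1 0 * g 1 1,
    y 0 * g 0 1 ^ 2 + y 1 * g 0 1 * g 1 1 + y 2 * g 1 1 ^ 2]

/-- The five model quadratic forms `u₁²−u₂²`, `u₂²`, `u₁²`, `u₁u₂`, `u₁²+u₂²`. -/
def fiveForms : Fin 5 → (Fin 3 → ℝ) :=
  ![![1, 0, -1], ![0, 0, 1], ![1, 0, 0], ![0, 1, 0], ![1, 0, 1]]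

lemma linAct_mul (g h : Matrix (Fin 2) (Fin 2) ℝ) (x : Fin 2 → ℝ) :
    linAct (g * h) x = linAct h (linAct g x) := by
  funext i
  fin_cases i <;> simp [linAct, Matrix.mul_apply, Fin.sum_univ_two] <;> ring

lemma quadAct_mul (g h : Matrix (Fin 2) (Fin 2) ℝ) (y : Fin 3 → ℝ) :
    quadAct (g * h) y = quadAct h (quadAct g y) := by
  funext i
  fin_cases i <;> simp [quadAct, Matrix.mul_apply, Fin.sum_univ_two] <;> ring

lemma quadAct_one (y : Fin 3 → ℝ) : quadAct 1 y = y := by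
  funext i
  fin_cases i <;> simp [quadAct]

/-- Discriminant invariant. -/
def Dinv (y : Fin 3 → ℝ) : ℝ := y 1 ^ 2 - 4 * y 0 * y 2

/-- Value of the quadratic form at the zero of the linear form. -/
def Einv (x : Fin 2 → ℝ) (y : Fin 3 → ℝ) : ℝ :=
  y 0 * x 1 ^ 2 - y 1 * x 0 * x 1 + y 2 * x 0 ^ 2

lemma Dinv_quadAct (g : Matrix (Fin 2) (Fin 2) ℝ) (y : Fin 3 → ℝ) :
    Dinv (quadAct g y) = g.det ^ 2 * Dinv y := by
  simp [Dinv, quadAct, Matrix.det_fin_two]; ring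

lemma Einv_act (g : Matrix (Fin 2) (Fin 2) ℝ) (x : Fin 2 → ℝ) (y : Fin 3 → ℝ) :
    Einv (linAct g x) (quadAct g y) = g.det ^ 2 * Einv x y := by
  simp [Einv, linAct, quadAct, Matrix.det_fin_two]; ring

lemma Dinv_smul (d : ℝ) (y : Fin 3 → ℝ) : Dinv (d • y) = d ^ 2 * Dinv y := by
  simp [Dinv]; ring

lemma quadAct_ne_zero {g : Matrix (Fin 2) (Fin 2) ℝ} (hg : IsUnit g.det)
    {y : Fin 3 → ℝ} (hy : y ≠ 0) : quadAct g y ≠ 0 := by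
  intro h
  apply hy
  have h1 : quadAct (g * g⁻¹) y = quadAct g⁻¹ (quadAct g y) := quadAct_mul _ _ _
  rw [Matrix.mul_nonsing_inv g hg, quadAct_one, h] at h1
  rw [h1]
  funext i
  fin_cases i <;> simp [quadAct]

/-- A lower-triangular matrix. -/
def lt2 (b e : ℝ) : Matrix (Fin 2) (Fin 2) ℝ := ![![1, 0], ![b, e]]

lemma det_lt2 (b e : ℝ) : (lt2 b e).det = e := by
  rw [Matrix.det_fin_two, lt2]; simp

lemma linAct_lt2 (b e c : ℝ) : linAct (lt2 b e) ![c, 0] = ![c, 0] := by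
  funext i
  fin_cases i <;> simp [linAct, lt2]

lemma quadAct_lt2 (b e : ℝ) (y : Fin 3 → ℝ) :
    quadAct (lt2 b e) y =
      ![y 0 + y 1 * b + y 2 * b ^ 2, (y 1 + 2 * y 2 * b) * e, y 2 * e ^ 2] := by
  funext i
  fin_cases i <;> simp [quadAct, lt2] <;> ring

lemma case4 (y : Fin 3 → ℝ) (h2 : y 2 ≠ 0) (s : ℝ)
    (hs : s ^ 2 = -(y 1 ^ 2 - 4 * y 0 * y 2)) :
    quadAct (lt2 (-(y 1) / (2 * y 2)) (s / (2 * y 2))) y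
      = (-(y 1 ^ 2 - 4 * y 0 * y 2) / (4 * y 2)) • fiveForms 4 := by
  have hb : y 1 + 2 * y 2 * (-(y 1) / (2 * y 2)) = 0 := by field_simp; ring_nf
  rw [quadAct_lt2, hb, zero_mul]
  funext i
  fin_cases i
  · simp [fiveForms]; field_simp; ring
  · simp [fiveForms]
  · simp [fiveForms]; field_simp; linear_combination 4 * hs

lemma case0 (y : Fin 3 → ℝ) (h2 : y 2 ≠ 0) (s : ℝ)
    (hs : s ^ 2 = y 1 ^ 2 - 4 * y 0 * y 2) :
    quadAct (lt2 (-(y 1) / (2 * y 2)) (s / (2 * y 2))) y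
      = (-(y 1 ^ 2 - 4 * y 0 * y 2) / (4 * y 2)) • fiveForms 0 := by
  have hb : y 1 + 2 * y 2 * (-(y 1) / (2 * y 2)) = 0 := by field_simp; ring_nf
  rw [quadAct_lt2, hb, zero_mul]
  funext i
  fin_cases i
  · simp [fiveForms]; field_simp; ring
  · simp [fiveForms]
  · simp [fiveForms]; field_simp; linear_combination 4 * hs

lemma case1 (y : Fin 3 → ℝ) (h2 : y 2 ≠ 0) (hD : y 1 ^ 2 - 4 * y 0 * y 2 = 0) :
    quadAct (lt2 (-(y 1) / (2 * y 2)) 1) y = y 2 • fiveForms 1 := by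
  have hb : y 1 + 2 * y 2 * (-(y 1) / (2 * y 2)) = 0 := by field_simp; ring_nf
  rw [quadAct_lt2, hb, zero_mul]
  funext i
  fin_cases i
  · simp [fiveForms]; field_simp; linear_combination -hD
  · simp [fiveForms]
  · simp [fiveForms]

lemma case3 (y : Fin 3 → ℝ) (h2 : y 2 = 0) (h1 : y 1 ≠ 0) :
    quadAct (lt2 (-(y 0) / y 1) 1) y = y 1 • fiveForms 3 := by
  rw [quadAct_lt2]
  funext i
  fin_cases i
  · simp [fiveForms, h2]; field_simp; ring
  · simp [fiveForms, h2]
  · simp [fiveForms, h2]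

lemma case2 (y : Fin 3 → ℝ) (h2 : y 2 = 0) (h1 : y 1 = 0) :
    quadAct (lt2 0 1) y = y 0 • fiveForms 2 := by
  rw [quadAct_lt2]
  funext i
  fin_cases i <;> simp [fiveForms, h1, h2]

lemma exists_norm (y : Fin 3 → ℝ) (hy : y ≠ 0) :
    ∃ (i : Fin 5) (b e d : ℝ), e ≠ 0 ∧ d ≠ 0 ∧
      quadAct (lt2 b e) y = d • fiveForms i := by
  by_cases h2 : y 2 = 0
  · by_cases h1 : y 1 = 0
    · have h0 : y 0 ≠ 0 := by
        intro h0
        apply hy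
        funext i
        fin_cases i <;> simpa
      exact ⟨2, 0, 1, y 0, one_ne_zero, h0, case2 y h2 h1⟩
    · exact ⟨3, -(y 0) / y 1, 1, y 1, one_ne_zero, h1, case3 y h2 h1⟩
  · rcases lt_trichotomy (y 1 ^ 2 - 4 * y 0 * y 2) 0 with hD | hD | hD
    · have hs : Real.sqrt (-(y 1 ^ 2 - 4 * y 0 * y 2)) ^ 2 = -(y 1 ^ 2 - 4 * y 0 * y 2) :=
        Real.sq_sqrt (by linarith)
      have hs0 : Real.sqrt (-(y 1 ^ 2 - 4 * y 0 * y 2)) ≠ 0 :=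
        (Real.sqrt_pos.mpr (by linarith)).ne'
      exact ⟨4, -(y 1) / (2 * y 2), Real.sqrt (-(y 1 ^ 2 - 4 * y 0 * y 2)) / (2 * y 2),
        -(y 1 ^ 2 - 4 * y 0 * y 2) / (4 * y 2),
        div_ne_zero hs0 (by simpa using h2),
        div_ne_zero (by linarith) (by simpa using h2), case4 y h2 _ hs⟩
    · exact ⟨1, -(y 1) / (2 * y 2), 1, y 2, one_ne_zero, h2, case1 y h2 hD⟩
    · have hs : Real.sqrt (y 1 ^ 2 - 4 * y 0 * y 2) ^ 2 = y 1 ^ 2 - 4 * y 0 * y 2 :=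
        Real.sq_sqrt (by linarith)
      have hs0 : Real.sqrt (y 1 ^ 2 - 4 * y 0 * y 2) ≠ 0 :=
        (Real.sqrt_pos.mpr hD).ne'
      exact ⟨0, -(y 1) / (2 * y 2), Real.sqrt (y 1 ^ 2 - 4 * y 0 * y 2) / (2 * y 2),
        -(y 1 ^ 2 - 4 * y 0 * y 2) / (4 * y 2),
        div_ne_zero hs0 (by simpa using h2),
        div_ne_zero (by linarith) (by simpa using h2), case0 y h2 _ hs⟩

lemma five_unique (i j : Fin 5) (Dy Ey p q p' q' : ℝ) (hp : 0 < p) (hq : q ≠ 0)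
    (hp' : 0 < p') (hq' : q' ≠ 0)
    (h1 : Dy = p * Dinv (fiveForms j)) (h2 : Ey = q * fiveForms j 2)
    (h3 : Dy = p' * Dinv (fiveForms i)) (h4 : Ey = q' * fiveForms i 2) : j = i := by
  fin_cases i <;> fin_cases j <;>
    first
      | rfl
      | (exfalso
         norm_num [fiveForms, Dinv, Matrix.cons_val_two, Matrix.vecHead, Matrix.vecTail] at h1 h2 h3 h4
         first
           | linarith
           | (apply hq; linarith)
           | (apply hq'; linarith))

/-- Classification of the five `GL(2,ℝ)`-orbits of pairs of a nonzero binary linear form and a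
nonzero binary quadratic form, up to scale. -/
theorem stmt11 (x : Fin 2 → ℝ) (hx : x ≠ 0) (y : Fin 3 → ℝ) (hy : y ≠ 0) :
    ∃! i : Fin 5, ∃ (g : Matrix (Fin 2) (Fin 2) ℝ) (c d : ℝ),
      IsUnit g.det ∧ c ≠ 0 ∧ d ≠ 0 ∧ linAct g x = ![c, 0] ∧ quadAct g y = d • fiveForms i := by
  have key : ∀ i : Fin 5,
      (∃ (g : Matrix (Fin 2) (Fin 2) ℝ) (c d : ℝ),
        IsUnit g.det ∧ c ≠ 0 ∧ d ≠ 0 ∧ linAct g x = ![c, 0] ∧ quadAct g y = d • fiveForms i) →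
      ∃ p q : ℝ, 0 < p ∧ q ≠ 0 ∧ Dinv y = p * Dinv (fiveForms i) ∧
        Einv x y = q * fiveForms i 2 := by
    rintro i ⟨g, c, d, hg, hc, hd, hl, hq⟩
    have hdet : g.det ≠ 0 := by simpa [isUnit_iff_ne_zero] using hg
    have hdet2 : (0:ℝ) < g.det ^ 2 := pow_two_pos_of_ne_zero hdet
    have h1 : g.det ^ 2 * Dinv y = d ^ 2 * Dinv (fiveForms i) := by
      rw [← Dinv_quadAct, hq, Dinv_smul]
    have h2 : g.det ^ 2 * Einv x y = d * c ^ 2 * fiveForms i 2 := by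
      rw [← Einv_act, hl, hq]
      simp [Einv]
      ring
    refine ⟨d ^ 2 / g.det ^ 2, d * c ^ 2 / g.det ^ 2,
      div_pos (pow_two_pos_of_ne_zero hd) hdet2,
      div_ne_zero (mul_ne_zero hd (pow_ne_zero _ hc)) hdet2.ne', ?_, ?_⟩ <;>
      (field_simp; linarith)
  -- existence
  have hx2 : x 0 ^ 2 + x 1 ^ 2 ≠ 0 := by
    intro h
    have h0 : x 0 = 0 := by nlinarith [sq_nonneg (x 0), sq_nonneg (x 1)]
    have h1 : x 1 = 0 := by nlinarith [sq_nonneg (x 0), sq_nonneg (x 1)]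
    apply hx
    funext i
    fin_cases i <;> simpa
  set g1 : Matrix (Fin 2) (Fin 2) ℝ := ![![x 0, -(x 1)], ![x 1, x 0]] with hg1
  have hdet1 : g1.det = x 0 ^ 2 + x 1 ^ 2 := by
    rw [Matrix.det_fin_two, hg1]; simp <;> ring
  have hu1 : IsUnit g1.det := by rw [hdet1]; exact isUnit_iff_ne_zero.mpr hx2
  have hlin1 : linAct g1 x = ![x 0 ^ 2 + x 1 ^ 2, 0] := by
    funext i
    fin_cases i <;> simp [linAct, hg1] <;> ring
  obtain ⟨i, b, e, d, he, hd, hq⟩ := exists_norm (quadAct g1 y) (quadAct_ne_zero hu1 hy)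
  have hreal : ∃ (g : Matrix (Fin 2) (Fin 2) ℝ) (c d : ℝ),
      IsUnit g.det ∧ c ≠ 0 ∧ d ≠ 0 ∧ linAct g x = ![c, 0] ∧ quadAct g y = d • fiveForms i := by
    refine ⟨g1 * lt2 b e, x 0 ^ 2 + x 1 ^ 2, d, ?_, hx2, hd, ?_, ?_⟩
    · rw [Matrix.det_mul, det_lt2]
      exact hu1.mul (isUnit_iff_ne_zero.mpr he)
    · rw [linAct_mul, hlin1, linAct_lt2]
    · rw [quadAct_mul, hq]
  refine ⟨i, hreal, ?_⟩
  intro j hj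
  obtain ⟨p, q, hp, hqne, hD1, hE1⟩ := key j hj
  obtain ⟨p', q', hp', hqne', hD2, hE2⟩ := key i hreal
  exact five_unique i j (Dinv y) (Einv x y) p q p' q' hp hqne hp' hqne' hD1 hE1 hD2 hE2
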